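/- Let 𝔥 be a nonzero planar quasi-homogeneous polynomial of type t̂ and degree r+|t̂|. If a planar quasi-homogeneous vector field P of type t̂ and degree k satisfies P = μ·D₀ = λ·X_𝔥 for some quasi-homogeneous polynomials μ of degree k and λ of degree k−r, then P = 0. (Equivalently, the subspaces {μ·D₀} and {λ·X_𝔥} intersect trivially.) -/

import Mathlib

open MvPolynomial

def IsQH (t : Fin 2 → ℕ) (k : ℕ) (f : MvPolynomial (Fin 2) ℝ) : Prop :=
  ∀ (ε : ℝ) (x : Fin 2 → ℝ),
    eval (fun i => ε ^ t i * x i) f = ε ^ k * eval x f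

def IsQHVF (t : Fin 2 → ℕ) (k : ℕ) (F : Fin 2 → MvPolynomial (Fin 2) ℝ) : Prop :=
  ∀ j, IsQH t (k + t j) (F j)

noncomputable def ham (h : MvPolynomial (Fin 2) ℝ) : Fin 2 → MvPolynomial (Fin 2) ℝ :=
  ![-(pderiv 1 h), pderiv 0 h]

noncomputable def D0 (t : Fin 2 → ℕ) : Fin 2 → MvPolynomial (Fin 2) ℝ :=
  ![C ((t 0 : ℝ)) * X 0, C ((t 1 : ℝ)) * X 1]

-- scaling substitution on a monomial
lemma aeval_scale_monomial (a : ℝ) (t : Fin 2 → ℕ) (d : Fin 2 →₀ ℕ) (c : ℝ) :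
    aeval (fun i => C (a ^ t i) * X i : Fin 2 → MvPolynomial (Fin 2) ℝ) (monomial d c)
      = monomial d (a ^ (∑ i, t i * d i) * c) := by
  rw [aeval_monomial, monomial_eq]
  rw [Finsupp.prod_fintype _ _ (by intro i; simp), Finsupp.prod_fintype _ _ (by intro i; simp)]
  simp only [mul_pow, ← C_pow, ← pow_mul]
  rw [Finset.prod_mul_distrib, ← map_prod, Finset.prod_pow_eq_pow_sum,
    algebraMap_eq, C_mul]
  ring

lemma coeff_aeval_scale (a : ℝ) (t : Fin 2 → ℕ) (f : MvPolynomial (Fin 2) ℝ) (d : Fin 2 →₀ ℕ) :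
    coeff d (aeval (fun i => C (a ^ t i) * X i : Fin 2 → MvPolynomial (Fin 2) ℝ) f)
      = a ^ (∑ i, t i * d i) * coeff d f := by
  induction f using MvPolynomial.induction_on' with
  | monomial d' c =>
    rw [aeval_scale_monomial, coeff_monomial, coeff_monomial]
    split
    · next h => subst h; rfl
    · simp
  | add p q hp hq => rw [map_add, coeff_add, hp, hq, coeff_add, mul_add]

lemma scale_eq (t : Fin 2 → ℕ) (m : ℕ) (f : MvPolynomial (Fin 2) ℝ) (hf : IsQH t m f) (a : ℝ) :
    aeval (fun i => C (a ^ t i) * X i : Fin 2 → MvPolynomial (Fin 2) ℝ) f = C (a ^ m) * f := by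
  apply MvPolynomial.funext
  intro x
  have h1 : eval x (aeval (fun i => C (a ^ t i) * X i : Fin 2 → MvPolynomial (Fin 2) ℝ) f)
      = eval (fun i => a ^ t i * x i) f := by
    have hxe : ∀ (y : Fin 2 → ℝ) (p : MvPolynomial (Fin 2) ℝ), aeval y p = eval y p :=
      fun _ _ => rfl
    have h := aeval_bind₁ (R := ℝ) x (fun i => C (a ^ t i) * X i) f
    simp only [bind₁] at h
    simp only [hxe] at h
    rw [h, show (fun i => eval x (C (a ^ t i) * X i)) = (fun i => a ^ t i * x i) from by
      funext i; simp]
  rw [h1, hf a x]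
  simp

lemma weight_eq (t : Fin 2 → ℕ) (m : ℕ) (f : MvPolynomial (Fin 2) ℝ) (hf : IsQH t m f)
    (d : Fin 2 →₀ ℕ) (hd : coeff d f ≠ 0) : ∑ i, t i * d i = m := by
  have h := congrArg (coeff d) (scale_eq t m f hf 2)
  rw [coeff_aeval_scale, coeff_C_mul] at h
  rw [mul_eq_mul_right_iff] at h
  rcases h with h | h
  · exact pow_right_injective₀ (by norm_num : (0:ℝ) < 2) (by norm_num) h
  · exact absurd h hd

lemma euler_term (t : Fin 2 → ℕ) (i : Fin 2) (d : Fin 2 →₀ ℕ) (c : ℝ) :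
    C (t i : ℝ) * X i * pderiv i (monomial d c) = monomial d (((t i * d i : ℕ) : ℝ) * c) := by
  rw [pderiv_monomial]
  rcases Nat.eq_zero_or_pos (d i) with h | h
  · simp [h]
  · have hle : Finsupp.single i 1 ≤ d := by
      rw [Finsupp.single_le_iff]; exact h
    rw [X, C_apply, monomial_mul, monomial_mul, zero_add, add_tsub_cancel_of_le hle]
    congr 1
    push_cast
    ring

lemma euler (t : Fin 2 → ℕ) (m : ℕ) (f : MvPolynomial (Fin 2) ℝ) (hf : IsQH t m f) :
    ∑ i : Fin 2, C (t i : ℝ) * X i * pderiv i f = C (m : ℝ) * f := by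
  conv_lhs => rw [f.as_sum]
  conv_rhs => rw [f.as_sum]
  simp only [map_sum, Finset.mul_sum]
  rw [Finset.sum_comm]
  apply Finset.sum_congr rfl
  intro d hd
  calc ∑ i : Fin 2, C (t i : ℝ) * X i * pderiv i (monomial d (coeff d f))
      = ∑ i : Fin 2, monomial d (((t i * d i : ℕ) : ℝ) * coeff d f) := by
        exact Finset.sum_congr rfl fun i _ => euler_term t i d (coeff d f)
    _ = monomial d (((∑ i : Fin 2, t i * d i : ℕ) : ℝ) * coeff d f) := by
        rw [← map_sum, ← Finset.sum_mul]; push_cast; rfl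
    _ = C (m : ℝ) * monomial d (coeff d f) := by
        rw [weight_eq t m f hf d (mem_support_iff.mp hd), C_mul_monomial]

/-- The subspaces `{μ·D₀}` and `{λ·X_𝔥}` intersect trivially: if a quasi-homogeneous
vector field can be written in both forms, it vanishes. -/
theorem dissipative_inter_hamMultiple_trivial (t : Fin 2 → ℕ) (ht : ∀ i, 0 < t i)
    (r k : ℕ) (hrk : r ≤ k)
    (𝔥 : MvPolynomial (Fin 2) ℝ) (h𝔥 : IsQH t (r + t 0 + t 1) 𝔥) (h𝔥0 : 𝔥 ≠ 0)
    (P : Fin 2 → MvPolynomial (Fin 2) ℝ) (hP : IsQHVF t k P)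
    (μ lam : MvPolynomial (Fin 2) ℝ) (hμ : IsQH t k μ) (hlam : IsQH t (k - r) lam)
    (h1 : ∀ j, P j = μ * D0 t j) (h2 : ∀ j, P j = lam * ham 𝔥 j) :
    ∀ j, P j = 0 := by
  have key0 : μ * D0 t 0 = lam * ham 𝔥 0 := (h1 0).symm.trans (h2 0)
  have key1 : μ * D0 t 1 = lam * ham 𝔥 1 := (h1 1).symm.trans (h2 1)
  have heuler := euler t (r + t 0 + t 1) 𝔥 h𝔥
  rw [Fin.sum_univ_two] at heuler
  have hz : lam * (C (t 0 : ℝ) * X 0 * pderiv 0 𝔥 + C (t 1 : ℝ) * X 1 * pderiv 1 𝔥) = 0 := by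
    have e : lam * ham 𝔥 0 * D0 t 1 - lam * ham 𝔥 1 * D0 t 0 = 0 := by
      rw [← key0, ← key1]; ring
    simp only [ham, D0, Matrix.cons_val_zero, Matrix.cons_val_one, Matrix.head_cons] at e
    linear_combination -e
  rw [heuler] at hz
  have hC : (C (((r + t 0 + t 1 : ℕ)) : ℝ) : MvPolynomial (Fin 2) ℝ) ≠ 0 := by
    simp only [ne_eq, C_eq_zero, Nat.cast_eq_zero]
    have := ht 0
    omega
  have hlam0 : lam = 0 := by
    rcases mul_eq_zero.mp hz with h | h
    · exact h
    · rcases mul_eq_zero.mp h with h | h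
      · exact absurd h hC
      · exact absurd h h𝔥0
  intro j
  rw [h2 j, hlam0, zero_mul]
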